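/- arXiv:2508.14396 — 2 statements merged into one kernel-verified Lean document; each statement's English description precedes it below -/
import Mathlib

section
/- There exists a ring R containing two strongly clean elements x and y with x·y = 1 but y·x ≠ 1; i.e., strong cleanness of individual elements does not force them to be two-sided inverses. -/
namespace SCEx

abbrev V : Type := (ℤ ⊕ ℤ) →₀ ℚ

noncomputable def B (i : ℤ) : V := Finsupp.single (Sum.inl i) 1
noncomputable def G (j : ℤ) : V := Finsupp.single (Sum.inr j) 1

noncomputable def xgP : ℕ → V
  | 0 => B 0 + B 1
  | n+1 => G (Int.ofNat n) - xgP n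

noncomputable def xgN : ℕ → V
  | 0 => B 0 + B 1
  | t+1 => G (Int.negSucc t) - xgN t

noncomputable def xg : ℤ → V
  | Int.ofNat n => xgP n
  | Int.negSucc t => xgN (t+1)

noncomputable def A : ℕ → V
  | 0 => B 0 - B (Int.negSucc 0)
  | n+1 => B (Int.ofNat (n+1)) - A n

noncomputable def M : ℕ → V
  | 0 => -G (Int.negSucc 0) - B 0
  | t+1 => M t - B (Int.negSucc t)

noncomputable def phiU : ℤ ⊕ ℤ → V
  | Sum.inl (Int.ofNat n) => B (Int.ofNat (n+1))
  | Sum.inl (Int.negSucc 0) => B 0 - B (Int.negSucc 0)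
  | Sum.inl (Int.negSucc (t+1)) => B (Int.negSucc t) - B (Int.negSucc (t+1))
  | Sum.inr j => xg j - G j

noncomputable def phiU' : ℤ ⊕ ℤ → V
  | Sum.inl (Int.ofNat 0) => M 0
  | Sum.inl (Int.ofNat (n+1)) => B (Int.ofNat n)
  | Sum.inl (Int.negSucc t) => M (t+1)
  | Sum.inr j => -G (j-1) - G j

noncomputable def phiV : ℤ ⊕ ℤ → V
  | Sum.inl (Int.ofNat 0) => B (Int.negSucc 0)
  | Sum.inl (Int.ofNat (n+1)) => A n
  | Sum.inl (Int.negSucc t) => B (Int.negSucc (t+1))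
  | Sum.inr j => G (j+1)

noncomputable def phiV' : ℤ ⊕ ℤ → V
  | Sum.inl (Int.ofNat n) => B (Int.ofNat n) + B (Int.ofNat (n+1))
  | Sum.inl (Int.negSucc 0) => B 0
  | Sum.inl (Int.negSucc (t+1)) => B (Int.negSucc t)
  | Sum.inr j => G (j-1)

noncomputable def phiE : ℤ ⊕ ℤ → V
  | Sum.inl _ => 0
  | Sum.inr j => G j

noncomputable def mk (φ : ℤ ⊕ ℤ → V) : Module.End ℚ V :=
  Finsupp.linearCombination ℚ φ

@[simp] lemma mk_B (φ : ℤ ⊕ ℤ → V) (i : ℤ) : mk φ (B i) = φ (Sum.inl i) := by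
  simp [mk, B]

@[simp] lemma mk_G (φ : ℤ ⊕ ℤ → V) (j : ℤ) : mk φ (G j) = φ (Sum.inr j) := by
  simp [mk, G]

noncomputable def u : Module.End ℚ V := mk phiU
noncomputable def u' : Module.End ℚ V := mk phiU'
noncomputable def v : Module.End ℚ V := mk phiV
noncomputable def v' : Module.End ℚ V := mk phiV'
noncomputable def e : Module.End ℚ V := mk phiE

-- application lemmas
@[simp] lemma u_B_nat (n : ℕ) : u (B (Int.ofNat n)) = B (Int.ofNat (n+1)) := by
  rw [u, mk_B]; rfl
@[simp] lemma u_B_neg0 : u (B (Int.negSucc 0)) = B 0 - B (Int.negSucc 0) := by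
  rw [u, mk_B]; rfl
@[simp] lemma u_B_negS (t : ℕ) :
    u (B (Int.negSucc (t+1))) = B (Int.negSucc t) - B (Int.negSucc (t+1)) := by
  rw [u, mk_B]; rfl
@[simp] lemma u_G (j : ℤ) : u (G j) = xg j - G j := by rw [u, mk_G]; rfl

@[simp] lemma u'_B_zero : u' (B (Int.ofNat 0)) = M 0 := by rw [u', mk_B]; rfl
@[simp] lemma u'_B_succ (n : ℕ) : u' (B (Int.ofNat (n+1))) = B (Int.ofNat n) := by
  rw [u', mk_B]; rfl
@[simp] lemma u'_B_neg (t : ℕ) : u' (B (Int.negSucc t)) = M (t+1) := by rw [u', mk_B]; rfl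
@[simp] lemma u'_G (j : ℤ) : u' (G j) = -G (j-1) - G j := by rw [u', mk_G]; rfl

@[simp] lemma v_B_zero : v (B (Int.ofNat 0)) = B (Int.negSucc 0) := by rw [v, mk_B]; rfl
@[simp] lemma v_B_succ (n : ℕ) : v (B (Int.ofNat (n+1))) = A n := by rw [v, mk_B]; rfl
@[simp] lemma v_B_neg (t : ℕ) : v (B (Int.negSucc t)) = B (Int.negSucc (t+1)) := by
  rw [v, mk_B]; rfl
@[simp] lemma v_G (j : ℤ) : v (G j) = G (j+1) := by rw [v, mk_G]; rfl

@[simp] lemma v'_B_nat (n : ℕ) :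
    v' (B (Int.ofNat n)) = B (Int.ofNat n) + B (Int.ofNat (n+1)) := by rw [v', mk_B]; rfl
@[simp] lemma v'_B_neg0 : v' (B (Int.negSucc 0)) = B 0 := by rw [v', mk_B]; rfl
@[simp] lemma v'_B_negS (t : ℕ) : v' (B (Int.negSucc (t+1))) = B (Int.negSucc t) := by
  rw [v', mk_B]; rfl
@[simp] lemma v'_G (j : ℤ) : v' (G j) = G (j-1) := by rw [v', mk_G]; rfl

@[simp] lemma e_B (i : ℤ) : e (B i) = 0 := by rw [e, mk_B]; rfl
@[simp] lemma e_G (j : ℤ) : e (G j) = G j := by rw [e, mk_G]; rfl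

-- xg chain relation
lemma xg_rel : ∀ j : ℤ, xg j + xg (j+1) = G j := by
  intro j
  cases j with
  | ofNat n =>
      show xg (Int.ofNat n) + xg (Int.ofNat (n+1)) = G (Int.ofNat n)
      rw [xg, xg, xgP]
      abel
  | negSucc t =>
      cases t with
      | zero =>
          show xg (Int.negSucc 0) + xg (Int.ofNat 0) = G (Int.negSucc 0)
          rw [xg, xg, xgN]
          show (G (Int.negSucc 0) - xgN 0) + xgP 0 = G (Int.negSucc 0)
          rw [xgN, xgP]
          abel
      | succ s =>
          show xg (Int.negSucc (s+1)) + xg (Int.negSucc s) = G (Int.negSucc (s+1))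
          rw [xg, xg]
          show xgN (s+2) + xgN (s+1) = G (Int.negSucc (s+1))
          rw [show xgN (s+2) = G (Int.negSucc (s+1)) - xgN (s+1) from rfl]
          abel

-- bridging defeq lemmas
@[simp] lemma u_B0 : u (B 0) = B 1 := u_B_nat 0
@[simp] lemma v_B0 : v (B 0) = B (Int.negSucc 0) := v_B_zero
@[simp] lemma v'_B0 : v' (B 0) = B 0 + B 1 := v'_B_nat 0
@[simp] lemma u'_B0 : u' (B 0) = M 0 := u'_B_zero
@[simp] lemma u'_B1 : u' (B 1) = B 0 := u'_B_succ 0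

lemma xg0 : xg 0 = B 0 + B 1 := rfl

lemma u_M0 : u (M 0) = B 0 := by
  rw [show M 0 = -G (Int.negSucc 0) - B 0 from rfl, map_sub, map_neg, u_G,
    show xg (Int.negSucc 0) = G (Int.negSucc 0) - (B 0 + B 1) from rfl, u_B0]
  abel

lemma u_M : ∀ t : ℕ, u (M (t+1)) = B (Int.negSucc t) := by
  intro t
  induction t with
  | zero =>
      rw [show M 1 = M 0 - B (Int.negSucc 0) from rfl, map_sub, u_M0, u_B_neg0]
      abel
  | succ s ih =>
      rw [show M (s+2) = M (s+1) - B (Int.negSucc (s+1)) from rfl, map_sub, ih, u_B_negS]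
      abel

lemma endext {f g : Module.End ℚ V}
    (h : ∀ a : ℤ ⊕ ℤ, f (Finsupp.single a 1) = g (Finsupp.single a 1)) : f = g := by
  refine Finsupp.lhom_ext fun a b => ?_
  have hb : (Finsupp.single a b : V) = b • Finsupp.single a 1 := by
    rw [Finsupp.smul_single, smul_eq_mul, mul_one]
  rw [hb, map_smul, map_smul, h]

lemma B_single (i : ℤ) : Finsupp.single (Sum.inl i : ℤ ⊕ ℤ) (1:ℚ) = B i := rfl
lemma G_single (j : ℤ) : Finsupp.single (Sum.inr j : ℤ ⊕ ℤ) (1:ℚ) = G j := rfl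

lemma uu' : u * u' = 1 := by
  apply endext
  rintro (i | j)
  · rw [B_single]
    cases i with
    | ofNat n =>
        cases n with
        | zero =>
            rw [Module.End.mul_apply, Module.End.one_apply, u'_B_zero, u_M0]
            rfl
        | succ m =>
            rw [Module.End.mul_apply, Module.End.one_apply, u'_B_succ, u_B_nat]
    | negSucc t =>
        rw [Module.End.mul_apply, Module.End.one_apply, u'_B_neg, u_M]
  · rw [G_single, Module.End.mul_apply, Module.End.one_apply, u'_G, map_sub, map_neg, u_G, u_G]
    have := xg_rel (j - 1)
    rw [sub_add_cancel] at this
    rw [← this]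
    abel

lemma u'_xgP : ∀ n : ℕ, u' (xgP n) = -G (Int.ofNat n - 1) := by
  intro n
  induction n with
  | zero =>
      rw [show xgP 0 = B 0 + B 1 from rfl, map_add, u'_B0, u'_B1,
        show M 0 = -G (Int.negSucc 0) - B 0 from rfl,
        show (Int.ofNat 0 - 1 : ℤ) = Int.negSucc 0 from rfl]
      abel
  | succ m ih =>
      rw [show xgP (m+1) = G (Int.ofNat m) - xgP m from rfl, map_sub, u'_G, ih,
        show (Int.ofNat (m+1) - 1 : ℤ) = Int.ofNat m from by rw [Int.ofNat_eq_coe, Int.ofNat_eq_coe]; push_cast; ring]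
      abel

lemma u'_xgN : ∀ t : ℕ, u' (xgN t) = -G (Int.negSucc t) := by
  intro t
  induction t with
  | zero =>
      rw [show xgN 0 = B 0 + B 1 from rfl, map_add, u'_B0, u'_B1,
        show M 0 = -G (Int.negSucc 0) - B 0 from rfl]
      abel
  | succ s ih =>
      rw [show xgN (s+1) = G (Int.negSucc s) - xgN s from rfl, map_sub, u'_G, ih,
        show (Int.negSucc s - 1 : ℤ) = Int.negSucc (s+1) from by rw [Int.negSucc_eq, Int.negSucc_eq]; push_cast; ring]
      abel

lemma u'_xg (j : ℤ) : u' (xg j) = -G (j - 1) := by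
  cases j with
  | ofNat n => rw [show xg (Int.ofNat n) = xgP n from rfl, u'_xgP]
  | negSucc t =>
      rw [show xg (Int.negSucc t) = xgN (t+1) from rfl, u'_xgN,
        show (Int.negSucc t - 1 : ℤ) = Int.negSucc (t+1) from by rw [Int.negSucc_eq, Int.negSucc_eq]; push_cast; ring]

lemma u'u : u' * u = 1 := by
  apply endext
  rintro (i | j)
  · rw [B_single]
    cases i with
    | ofNat n =>
        rw [Module.End.mul_apply, Module.End.one_apply, u_B_nat, u'_B_succ]
    | negSucc t =>
        cases t with
        | zero =>
            rw [Module.End.mul_apply, Module.End.one_apply, u_B_neg0, map_sub, u'_B0, u'_B_neg,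
              show M 1 = M 0 - B (Int.negSucc 0) from rfl]
            abel
        | succ s =>
            rw [Module.End.mul_apply, Module.End.one_apply, u_B_negS, map_sub, u'_B_neg, u'_B_neg,
              show M (s+2) = M (s+1) - B (Int.negSucc (s+1)) from rfl]
            abel
  · rw [G_single, Module.End.mul_apply, Module.End.one_apply, u_G, map_sub, u'_xg, u'_G]
    abel

lemma v'_A : ∀ n : ℕ, v' (A n) = B (Int.ofNat (n+1)) := by
  intro n
  induction n with
  | zero =>
      rw [show A 0 = B 0 - B (Int.negSucc 0) from rfl, map_sub, v'_B0, v'_B_neg0,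
        show B (Int.ofNat 1) = B 1 from rfl]
      abel
  | succ m ih =>
      rw [show A (m+1) = B (Int.ofNat (m+1)) - A m from rfl, map_sub, v'_B_nat, ih]
      abel

lemma v'v : v' * v = 1 := by
  apply endext
  rintro (i | j)
  · rw [B_single]
    cases i with
    | ofNat n =>
        cases n with
        | zero =>
            rw [Module.End.mul_apply, Module.End.one_apply, v_B_zero, v'_B_neg0]
            rfl
        | succ m =>
            rw [Module.End.mul_apply, Module.End.one_apply, v_B_succ, v'_A]
    | negSucc t =>
        rw [Module.End.mul_apply, Module.End.one_apply, v_B_neg, v'_B_negS]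
  · rw [G_single, Module.End.mul_apply, Module.End.one_apply, v_G, v'_G]
    rw [show (j + 1 - 1 : ℤ) = j from by omega]

lemma vv' : v * v' = 1 := by
  apply endext
  rintro (i | j)
  · rw [B_single]
    cases i with
    | ofNat n =>
        cases n with
        | zero =>
            rw [Module.End.mul_apply, Module.End.one_apply, v'_B_nat, map_add, v_B_zero, v_B_succ,
              show A 0 = B 0 - B (Int.negSucc 0) from rfl,
              show B (Int.ofNat 0) = B 0 from rfl]
            abel
        | succ m =>
            rw [Module.End.mul_apply, Module.End.one_apply, v'_B_nat, map_add, v_B_succ, v_B_succ,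
              show A (m+1) = B (Int.ofNat (m+1)) - A m from rfl]
            abel
    | negSucc t =>
        cases t with
        | zero =>
            rw [Module.End.mul_apply, Module.End.one_apply, v'_B_neg0, v_B0]
        | succ s =>
            rw [Module.End.mul_apply, Module.End.one_apply, v'_B_negS, v_B_neg]
  · rw [G_single, Module.End.mul_apply, Module.End.one_apply, v'_G, v_G]
    rw [show (j - 1 + 1 : ℤ) = j from by omega]

lemma e_idem : e * e = e := by
  apply endext
  rintro (i | j) <;> simp [B_single, G_single, Module.End.mul_apply]

lemma e_A : ∀ n : ℕ, e (A n) = 0 := by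
  intro n
  induction n with
  | zero =>
      rw [show A 0 = B 0 - B (Int.negSucc 0) from rfl, map_sub, e_B, e_B, sub_zero]
  | succ m ih =>
      rw [show A (m+1) = B (Int.ofNat (m+1)) - A m from rfl, map_sub, e_B, ih, sub_zero]

lemma ev : e * v = v * e := by
  apply endext
  rintro (i | j)
  · rw [B_single, Module.End.mul_apply, Module.End.mul_apply, e_B, map_zero]
    cases i with
    | ofNat n =>
        cases n with
        | zero => rw [v_B_zero, e_B]
        | succ m => rw [v_B_succ, e_A]
    | negSucc t => rw [v_B_neg, e_B]
  · rw [G_single, Module.End.mul_apply, Module.End.mul_apply, e_G, v_G, e_G]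

lemma uA : ∀ n : ℕ, A n + u (A n) = B (Int.ofNat (n+1)) := by
  intro n
  induction n with
  | zero =>
      rw [show A 0 = B 0 - B (Int.negSucc 0) from rfl, map_sub, u_B0, u_B_neg0,
        show B (Int.ofNat 1) = B 1 from rfl]
      abel
  | succ m ih =>
      rw [show A (m+1) = B (Int.ofNat (m+1)) - A m from rfl, map_sub, u_B_nat]
      have : A m + u (A m) = B (Int.ofNat (m+1)) := ih
      rw [show B (Int.ofNat (m+1)) - A m + (B (Int.ofNat (m+1+1)) - u (A m))
          = B (Int.ofNat (m+1)) - (A m + u (A m)) + B (Int.ofNat (m+2)) from by abel, ih]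
      abel

lemma xy : (1 + u) * (e + v) = 1 := by
  apply endext
  rintro (i | j)
  · simp only [B_single, Module.End.mul_apply, LinearMap.add_apply, Module.End.one_apply,
      e_B, zero_add]
    cases i with
    | ofNat n =>
        cases n with
        | zero =>
            rw [v_B_zero, u_B_neg0]
            show B (Int.negSucc 0) + (B 0 - B (Int.negSucc 0)) = B 0
            abel
        | succ m =>
            rw [v_B_succ, uA]
    | negSucc t =>
        rw [v_B_neg, u_B_negS]
        abel
  · simp only [G_single, Module.End.mul_apply, LinearMap.add_apply, Module.End.one_apply,
      e_G, v_G, map_add, u_G]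
    rw [← xg_rel j]
    abel

lemma xk : (1 + u) (G 0 - B 0) = 0 := by
  rw [map_sub, LinearMap.add_apply, Module.End.one_apply, LinearMap.add_apply,
    Module.End.one_apply, u_G, u_B0, xg0]
  abel

lemma yx_ne : (e + v) * (1 + u) ≠ 1 := by
  intro h
  have h2 := congrArg (fun f : Module.End ℚ V => f (G 0 - B 0)) h
  simp only [Module.End.mul_apply, Module.End.one_apply] at h2
  rw [xk, map_zero] at h2
  have h3 := congrArg (fun z : V => z (Sum.inr 0)) h2
  simp [G, B, Finsupp.single_apply, Finsupp.sub_apply] at h3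

end SCEx

/-- There is a ring `R` with strongly clean elements `x`, `y` such that
`x * y = 1` but `y * x ≠ 1`. -/
theorem stmt8 :
    ∃ (R : Type) (_ : Ring R) (x y : R),
      (∃ e u : R, IsIdempotentElem e ∧ IsUnit u ∧ x = e + u ∧ e * u = u * e) ∧
      (∃ e u : R, IsIdempotentElem e ∧ IsUnit u ∧ y = e + u ∧ e * u = u * e) ∧
      x * y = 1 ∧ y * x ≠ 1 := by
  refine ⟨Module.End ℚ SCEx.V, inferInstance, 1 + SCEx.u, SCEx.e + SCEx.v, ?_, ?_,
    SCEx.xy, SCEx.yx_ne⟩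
  · exact ⟨1, SCEx.u, IsIdempotentElem.one,
      ⟨⟨SCEx.u, SCEx.u', SCEx.uu', SCEx.u'u⟩, rfl⟩, rfl, by rw [one_mul, mul_one]⟩
  · exact ⟨SCEx.e, SCEx.v, SCEx.e_idem,
      ⟨⟨SCEx.v, SCEx.v', SCEx.vv', SCEx.v'v⟩, rfl⟩, rfl, SCEx.ev⟩
end

section
/- The endomorphism ring of any module of finite length over any ring is strongly clean: every endomorphism of a finite length module decomposes as the sum of an idempotent and an automorphism that commute with each other. -/
/-- The endomorphism ring of a module of finite length over any ring is strongly
clean: every endomorphism is the sum of an idempotent and a unit that commute. -/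
theorem stmt13 (R M : Type*) [Ring R] [AddCommGroup M] [Module R M]
    (hM : IsFiniteLength R M) (f : Module.End R M) :
    ∃ e u : Module.End R M, IsIdempotentElem e ∧ IsUnit u ∧ f = e + u ∧ e * u = u * e := by
  obtain ⟨_, _⟩ := isFiniteLength_iff_isNoetherian_isArtinian.mp hM
  obtain ⟨n, hn⟩ := Filter.eventually_atTop.mp f.eventually_isCompl_ker_pow_range_pow
  set N := n + 1 with hN
  have hc : IsCompl (LinearMap.ker (f ^ N)) (LinearMap.range (f ^ N)) := hn N (Nat.le_succ n)
  set p := LinearMap.ker (f ^ N) with hp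
  set q := LinearMap.range (f ^ N) with hq
  -- p and q are f-stable
  have hcomm : ∀ x, (f ^ N) (f x) = f ((f ^ N) x) := by
    intro x
    simp only [← Module.End.mul_apply, ← pow_succ, ← pow_succ']
  have hfp : ∀ x ∈ p, f x ∈ p := by
    intro x hx
    simp only [hp, LinearMap.mem_ker] at hx ⊢
    rw [hcomm, hx, map_zero]
  have hfq : ∀ x ∈ q, f x ∈ q := by
    rintro x ⟨y, rfl⟩
    exact ⟨f y, hcomm y⟩
  have hfpi : ∀ (k : ℕ), ∀ x ∈ p, (f ^ k) x ∈ p := by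
    intro k
    induction k with
    | zero => simp
    | succ k ih =>
      intro x hx
      rw [pow_succ', Module.End.mul_apply]
      exact hfp _ (ih x hx)
  -- the projection onto p along q
  set e : Module.End R M := p.subtype.comp (p.projectionOnto q hc) with he
  have heP : ∀ x ∈ p, e x = x := fun x hx => by
    simp [he, Submodule.projectionOnto_apply_left hc ⟨x, hx⟩]
  have heQ : ∀ x ∈ q, e x = 0 := fun x hx => by
    simp [he, Submodule.projectionOnto_apply_of_mem_right hc hx]
  have hdecomp : ∀ x : M, ∃ a ∈ p, ∃ b ∈ q, x = a + b := by
    intro x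
    have : x ∈ p ⊔ q := by rw [hc.sup_eq_top]; trivial
    obtain ⟨a, ha, b, hb, hab⟩ := Submodule.mem_sup.mp this
    exact ⟨a, ha, b, hb, hab.symm⟩
  have hef : ∀ x, e (f x) = f (e x) := by
    intro x
    obtain ⟨a, ha, b, hb, rfl⟩ := hdecomp x
    rw [map_add, map_add, map_add, heP a ha, heQ b hb, heP _ (hfp a ha), heQ _ (hfq b hb)]
    simp
  set u : Module.End R M := f - e with hu
  have hue : ∀ x ∈ p, u x = f x - x := fun x hx => by
    simp [hu, heP x hx]
  have huq : ∀ x ∈ q, u x = f x := fun x hx => by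
    simp [hu, heQ x hx]
  refine ⟨e, u, ?_, ?_, by rw [hu]; abel, ?_⟩
  · -- idempotent
    ext x
    exact heP _ (by simp [he, Submodule.coe_mem])
  · -- u is a unit
    rw [Module.End.isUnit_iff]
    constructor
    · -- injective
      intro x y hxy
      rw [← sub_eq_zero, ← map_sub] at hxy
      set z := x - y with hz
      suffices hz0 : z = 0 by rwa [← sub_eq_zero]
      obtain ⟨a, ha, b, hb, hab⟩ := hdecomp z
      rw [hab] at hxy
      rw [map_add, hue a ha, huq b hb] at hxy
      -- (f a - a) + f b = 0, components in p and q
      have h1 : f a - a ∈ p := p.sub_mem (hfp a ha) ha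
      have h2 : f b ∈ q := hfq b hb
      have hfb : f b ∈ p := by
        have : f b = -(f a - a) := by linear_combination (norm := abel) hxy
        rw [this]; exact p.neg_mem h1
      have hb0 : f b = 0 := by
        have := hc.disjoint.le_bot ⟨hfb, h2⟩
        simpa using this
      have hfa : f a - a = 0 := by rwa [hb0, add_zero] at hxy
      -- a ∈ ker f^N and f a = a implies a = 0
      have hfaa : f a = a := by rwa [sub_eq_zero] at hfa
      have hfka : ∀ k, (f ^ k) a = a := by
        intro k
        induction k with
        | zero => simp
        | succ k ih => rw [pow_succ, Module.End.mul_apply, hfaa, ih]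
      have ha0 : a = 0 := by
        have := (LinearMap.mem_ker).mp ha
        rwa [hfka N] at this
      -- b ∈ q and f b = 0 implies b ∈ p ∩ q = 0
      have hbp : b ∈ p := by
        rw [hp, LinearMap.mem_ker, hN, pow_succ, Module.End.mul_apply, hb0, map_zero]
      have hb0' : b = 0 := by
        have := hc.disjoint.le_bot ⟨hbp, hb⟩
        simpa using this
      rw [hab, ha0, hb0', add_zero]
    · -- surjective
      intro y
      obtain ⟨a, ha, b, hb, rfl⟩ := hdecomp y
      -- preimage of a : x₁ = -(∑ i < N, f^i a)
      set s : M := ∑ i ∈ Finset.range N, (f ^ i) a with hs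
      have hsp : s ∈ p := Submodule.sum_mem p fun i _ => hfpi i a ha
      have hfs : f s - s = -a := by
        have : f s - s = ∑ i ∈ Finset.range N, ((f ^ (i + 1)) a - (f ^ i) a) := by
          rw [Finset.sum_sub_distrib, hs, map_sum, sub_left_inj]
          exact Finset.sum_congr rfl fun i _ => by
            rw [pow_succ', Module.End.mul_apply]
        rw [this, Finset.sum_range_sub (fun i => (f ^ i) a), pow_zero,
          (LinearMap.mem_ker).mp ha, Module.End.one_apply, zero_sub]
      have hu1 : u (-s) = a := by
        rw [map_neg, hue s hsp, neg_sub, ← neg_sub (f s) s, hfs, neg_neg]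
      -- preimage of b : b = f^N c, take x₂ = f^n (component of c in q)... directly:
      obtain ⟨c, hcb⟩ := hb
      obtain ⟨c₁, hc1, c₂, hc2, rfl⟩ := hdecomp c
      have hfc1 : (f ^ N) c₁ = 0 := (LinearMap.mem_ker).mp hc1
      obtain ⟨d, hd⟩ := hc2
      set x₂ : M := (f ^ n) c₂ with hx₂
      have hx₂q : x₂ ∈ q := by
        rw [hx₂, ← hd, ← Module.End.mul_apply, ← pow_add]
        exact ⟨(f ^ n) d, by rw [← Module.End.mul_apply, ← pow_add, Nat.add_comm]⟩
      have hfx₂ : f x₂ = b := by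
        rw [hx₂, ← Module.End.mul_apply, ← pow_succ', ← hN, ← hcb, map_add, hfc1, zero_add]
      have hu2 : u x₂ = b := by rw [huq x₂ hx₂q, hfx₂]
      exact ⟨-s + x₂, by rw [map_add, hu1, hu2]⟩
  · -- e * u = u * e
    have : e * f = f * e := LinearMap.ext hef
    rw [hu, mul_sub, sub_mul, this]
end
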